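/- The function h(x) = coth(w₁ - x) + coth(w₂ - x), for constants w₁, w₂, satisfies the third-order-free non-linear ODE h'' - 3 h h' + h(h² - 4) = 0 at every point where sinh(w₁ - x) ≠ 0 and sinh(w₂ - x) ≠ 0. -/

import Mathlib

open Real

lemma sub_hasDerivAt (w t : ℝ) : HasDerivAt (fun s : ℝ => w - s) (-1) t := by
  simpa using ((hasDerivAt_id t).const_sub w)

lemma coth_hasDerivAt (w t : ℝ) (hs : Real.sinh (w - t) ≠ 0) :
    HasDerivAt (fun s => Real.cosh (w - s) / Real.sinh (w - s))
      (1 / Real.sinh (w - t) ^ 2) t := by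
  have hc : HasDerivAt (fun s => Real.cosh (w - s)) (-Real.sinh (w - t)) t := by
    simpa [Function.comp_def] using (Real.hasDerivAt_cosh (w - t)).comp t (sub_hasDerivAt w t)
  have hsd : HasDerivAt (fun s => Real.sinh (w - s)) (-Real.cosh (w - t)) t := by
    simpa [Function.comp_def] using (Real.hasDerivAt_sinh (w - t)).comp t (sub_hasDerivAt w t)
  have := hc.div hsd hs
  apply this.congr_deriv
  have h1 := Real.cosh_sq_sub_sinh_sq (w - t)
  field_simp
  nlinarith [h1]

lemma csch2_hasDerivAt (w t : ℝ) (hs : Real.sinh (w - t) ≠ 0) :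
    HasDerivAt (fun s => 1 / Real.sinh (w - s) ^ 2)
      (2 * Real.cosh (w - t) / Real.sinh (w - t) ^ 3) t := by
  have hsd : HasDerivAt (fun s => Real.sinh (w - s)) (-Real.cosh (w - t)) t := by
    simpa [Function.comp_def] using (Real.hasDerivAt_sinh (w - t)).comp t (sub_hasDerivAt w t)
  have h2 : HasDerivAt (fun s => Real.sinh (w - s) ^ 2)
      (2 * Real.sinh (w - t) * (-Real.cosh (w - t))) t := by
    simpa [pow_two, mul_comm, Pi.mul_def] using (hsd.pow 2)
  have := ((hasDerivAt_const t (1:ℝ)).div h2 (pow_ne_zero 2 hs))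
  apply this.congr_deriv
  field_simp
  ring

/-- The function `h x = coth (w₁ - x) + coth (w₂ - x)` satisfies
`h'' - 3 h h' + h (h² - 4) = 0` wherever both hyperbolic sines are nonzero. -/
theorem stmt6 (w₁ w₂ : ℝ) :
    ∀ x : ℝ, Real.sinh (w₁ - x) ≠ 0 → Real.sinh (w₂ - x) ≠ 0 →
      (let h : ℝ → ℝ := fun t =>
        Real.cosh (w₁ - t) / Real.sinh (w₁ - t) +
        Real.cosh (w₂ - t) / Real.sinh (w₂ - t)
      deriv (deriv h) x - 3 * h x * deriv h x + h x * ((h x) ^ 2 - 4) = 0) := by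
  intro x h1 h2
  set h : ℝ → ℝ := fun t =>
    Real.cosh (w₁ - t) / Real.sinh (w₁ - t) +
    Real.cosh (w₂ - t) / Real.sinh (w₂ - t) with hh
  set g : ℝ → ℝ := fun t => 1 / Real.sinh (w₁ - t) ^ 2 + 1 / Real.sinh (w₂ - t) ^ 2 with hg
  have hderiv : ∀ t, Real.sinh (w₁ - t) ≠ 0 → Real.sinh (w₂ - t) ≠ 0 →
      HasDerivAt h (g t) t := fun t a b =>
    (coth_hasDerivAt w₁ t a).add (coth_hasDerivAt w₂ t b)
  have hopen : IsOpen {t : ℝ | Real.sinh (w₁ - t) ≠ 0 ∧ Real.sinh (w₂ - t) ≠ 0} := by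
    apply IsOpen.inter
    · exact isOpen_compl_singleton.preimage (Real.continuous_sinh.comp (continuous_const.sub continuous_id))
    · exact isOpen_compl_singleton.preimage (Real.continuous_sinh.comp (continuous_const.sub continuous_id))
  have hmem : {t : ℝ | Real.sinh (w₁ - t) ≠ 0 ∧ Real.sinh (w₂ - t) ≠ 0} ∈ nhds x :=
    hopen.mem_nhds ⟨h1, h2⟩
  have hEq : deriv h =ᶠ[nhds x] g := by
    filter_upwards [hmem] with t ht
    exact (hderiv t ht.1 ht.2).deriv
  have hderiv2 : HasDerivAt g
      (2 * Real.cosh (w₁ - x) / Real.sinh (w₁ - x) ^ 3 +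
       2 * Real.cosh (w₂ - x) / Real.sinh (w₂ - x) ^ 3) x :=
    (csch2_hasDerivAt w₁ x h1).add (csch2_hasDerivAt w₂ x h2)
  have hd1 : deriv h x = g x := (hderiv x h1 h2).deriv
  have hd2 : deriv (deriv h) x =
      2 * Real.cosh (w₁ - x) / Real.sinh (w₁ - x) ^ 3 +
      2 * Real.cosh (w₂ - x) / Real.sinh (w₂ - x) ^ 3 := by
    rw [Filter.EventuallyEq.deriv_eq hEq]
    exact hderiv2.deriv
  show deriv (deriv h) x - 3 * h x * deriv h x + h x * ((h x) ^ 2 - 4) = 0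
  rw [hd1, hd2]
  simp only [hh, hg]
  have e1 := Real.cosh_sq_sub_sinh_sq (w₁ - x)
  have e2 := Real.cosh_sq_sub_sinh_sq (w₂ - x)
  set s1 := Real.sinh (w₁ - x)
  set s2 := Real.sinh (w₂ - x)
  set c1 := Real.cosh (w₁ - x)
  set c2 := Real.cosh (w₂ - x)
  field_simp
  linear_combination (3*s2^2*s1*c2 + c1*s2^3) * e1 + (3*c1*s2*s1^2 + s1^3*c2) * e2
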